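/- Given a belt of four vectors v₁, v₂, v₃, v₄ in ℝ⁴ (with pairwise Pedoe products as in a ℚ(√-7) tentbase), the two peaks v₅ and v₅' that complete the belt to a tent satisfy v₅ + v₅' = v₁ + v₂ + v₃ + v₄. Abstractly: if v₅ satisfies the linear-quadratic conditions ⟨v₅,v₅⟩ = 1, ⟨v₅,v₁⟩ = -5/2, ⟨v₅,v₂⟩ = -1, ⟨v₅,v₃⟩ = -5/2, ⟨v₅,v₄⟩ = -1 (with respect to the Minkowski form G_M), then so does v₅' := v₁+v₂+v₃+v₄-v₅, where v₁,...,v₄ satisfy the tentbase Gram relations. -/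
import Mathlib


open Matrix

noncomputable def GM : Matrix (Fin 4) (Fin 4) ℝ :=
  !![0, -1/2, 0, 0; -1/2, 0, 0, 0; 0, 0, 1, 0; 0, 0, 0, 1]

/-- The Minkowski bilinear form on ℝ⁴. -/
noncomputable def P (x y : Fin 4 → ℝ) : ℝ := x ⬝ᵥ GM.mulVec y

set_option maxRecDepth 4000 in
lemma P_eq (x y : Fin 4 → ℝ) :
    P x y = -(x 0 * y 1) / 2 - x 1 * y 0 / 2 + x 2 * y 2 + x 3 * y 3 := by
  simp [P, GM, mulVec, dotProduct, Fin.sum_univ_four, Matrix.vecHead, Matrix.vecTail]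
  ring

/-- In a `ℚ(√-7)` tentbase, if `v₅` is a peak then `v₅' = v₁+v₂+v₃+v₄-v₅` is the
other peak, satisfying the same Pedoe product conditions with odd/even indices
exchanged. -/
theorem stmt_17 (v₁ v₂ v₃ v₄ v₅ : Fin 4 → ℝ)
    (h11 : P v₁ v₁ = 1) (h22 : P v₂ v₂ = 1) (h33 : P v₃ v₃ = 1) (h44 : P v₄ v₄ = 1)
    (h12 : P v₁ v₂ = -1) (h23 : P v₂ v₃ = -1) (h34 : P v₃ v₄ = -1) (h41 : P v₄ v₁ = -1)
    (h13 : P v₁ v₃ = -5/2) (h24 : P v₂ v₄ = -5/2)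
    (h55 : P v₅ v₅ = 1)
    (h51 : P v₅ v₁ = -5/2) (h52 : P v₅ v₂ = -1)
    (h53 : P v₅ v₃ = -5/2) (h54 : P v₅ v₄ = -1) :
    P (v₁ + v₂ + v₃ + v₄ - v₅) (v₁ + v₂ + v₃ + v₄ - v₅) = 1 ∧
    P (v₁ + v₂ + v₃ + v₄ - v₅) v₁ = -1 ∧
    P (v₁ + v₂ + v₃ + v₄ - v₅) v₂ = -5/2 ∧
    P (v₁ + v₂ + v₃ + v₄ - v₅) v₃ = -1 ∧
    P (v₁ + v₂ + v₃ + v₄ - v₅) v₄ = -5/2 := by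
  simp only [P_eq, Pi.add_apply, Pi.sub_apply] at *
  refine ⟨?_, ?_, ?_, ?_, ?_⟩
  · linear_combination h11 + h22 + h33 + h44 + 2*h12 + 2*h23 + 2*h34 + 2*h41 +
      2*h13 + 2*h24 - 2*h51 - 2*h52 - 2*h53 - 2*h54 + h55
  · linear_combination h11 + h12 + h13 + h41 - h51
  · linear_combination h12 + h22 + h23 + h24 - h52
  · linear_combination h13 + h23 + h33 + h34 - h53
  · linear_combination h41 + h24 + h34 + h44 - h54
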